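/- arXiv:1810.02538 — 4 statements merged into one kernel-verified Lean document; each statement's English description precedes it below -/
import Mathlib

section
/- Let μ be a compactly supported probability measure on ℝ whose Stieltjes transform satisfies G_μ(r(μ)) = ∞ (where the value at the right edge r(μ) is defined as the monotone limit). Then the R-transform R_μ(z) = K_μ(z) − 1/z converges to r(μ) as z → ∞. -/
open MeasureTheory Filter Topology

noncomputable def rEdge (μ : Measure ℝ) : ℝ := sInf {r : ℝ | μ (Set.Ioi r) = 0}

def suppBdd (μ : Measure ℝ) : Prop := ∃ R : ℝ, μ {y : ℝ | R < |y|} = 0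

noncomputable def stG (μ : Measure ℝ) (l : ℝ) : ℝ := ∫ y, (l - y)⁻¹ ∂μ

/-- If G_μ(r(μ)) = ∞ (monotone limit, i.e. the edge integral diverges), then the
    R-transform R_μ(z) = K_μ(z) − 1/z tends to r(μ) as z → ∞. -/
theorem stmt3 (μ : Measure ℝ) [IsProbabilityMeasure μ] (hcs : suppBdd μ)
    (hdiv : ∫⁻ y, ENNReal.ofReal ((rEdge μ - y)⁻¹) ∂μ = ⊤)
    (K : ℝ → ℝ)
    (hK : ∀ z : ℝ, 0 < z → rEdge μ < K z ∧ stG μ (K z) = z) :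
    Tendsto (fun z : ℝ => K z - 1 / z) atTop (𝓝 (rEdge μ)) := by
  set r := rEdge μ with hr
  obtain ⟨R, hR⟩ := hcs
  have hSne : {s : ℝ | μ (Set.Ioi s) = 0}.Nonempty := by
    refine ⟨|R|, measure_mono_null ?_ hR⟩
    intro y hy
    simp only [Set.mem_setOf_eq]
    calc R ≤ |R| := le_abs_self R
      _ < y := hy
      _ ≤ |y| := le_abs_self y
  have hrnull : μ (Set.Ioi r) = 0 := by
    have hex : ∀ n : ℕ, ∃ s ∈ {s : ℝ | μ (Set.Ioi s) = 0}, s < r + 1 / (n + 1) := by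
      intro n
      apply exists_lt_of_csInf_lt hSne
      have h0 : (0:ℝ) < 1 / (n + 1) := by positivity
      have hrd : sInf {s : ℝ | μ (Set.Ioi s) = 0} = r := rfl
      linarith
    choose s hs hslt using hex
    have hsub : Set.Ioi r ⊆ ⋃ n, Set.Ioi (s n) := by
      intro y hy
      obtain ⟨n, hn⟩ := exists_nat_one_div_lt (sub_pos.mpr (show r < y from hy) : (0:ℝ) < y - r)
      exact Set.mem_iUnion.mpr ⟨n, by have := hslt n; simp only [Set.mem_Ioi]; push_cast at hn ⊢; linarith⟩
    exact measure_mono_null hsub (measure_iUnion_null hs)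
  have hae : ∀ᵐ y ∂μ, y ≤ r := by
    rw [ae_iff]
    convert hrnull using 2
    ext y
    simp [not_le]
  have hint : ∀ l : ℝ, r < l → Integrable (fun y => (l - y)⁻¹) μ := by
    intro l hl
    apply Integrable.mono' (integrable_const ((l - r)⁻¹))
    · exact (measurable_const.sub measurable_id).inv.aestronglyMeasurable
    · filter_upwards [hae] with y hy
      have h1 : (0:ℝ) < l - y := by linarith
      rw [Real.norm_eq_abs, abs_of_nonneg (by positivity)]
      exact inv_anti₀ (by linarith) (by linarith)
  have hmono : ∀ a b : ℝ, r < a → a ≤ b → stG μ b ≤ stG μ a := by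
    intro a b ha hab
    apply integral_mono_ae (hint b (lt_of_lt_of_le ha hab)) (hint a ha)
    filter_upwards [hae] with y hy
    exact inv_anti₀ (by linarith) (by linarith)
  have hKt : Tendsto K atTop (𝓝 r) := by
    rw [Metric.tendsto_nhds]
    intro ε hε
    filter_upwards [eventually_gt_atTop (max 0 (stG μ (r + ε)))] with z hz
    have hz0 : 0 < z := lt_of_le_of_lt (le_max_left _ _) hz
    obtain ⟨hK1, hK2⟩ := hK z hz0
    have hub : K z < r + ε := by
      by_contra h
      push_neg at h
      have h2 := hmono (r + ε) (K z) (by linarith) h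
      rw [hK2] at h2
      have h3 := le_max_right 0 (stG μ (r + ε))
      linarith
    rw [Real.dist_eq, abs_of_pos (sub_pos.mpr hK1)]
    linarith
  have h1 : Tendsto (fun z : ℝ => 1 / z) atTop (𝓝 (0:ℝ)) := by
    simpa only [one_div] using tendsto_inv_atTop_zero
  simpa using hKt.sub h1
end

section
/- Let μ be a compactly supported probability measure on ℝ. Then the R-transform R_μ is strictly increasing on (0, G_μ(r(μ))) unless μ is a point mass, in which case R_μ is constant. -/
open MeasureTheory Filter Topology

lemma eq_dirac_of (μ : Measure ℝ) [IsProbabilityMeasure μ] (x : ℝ) (h : μ ({x}ᶜ) = 0) :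
    μ = Measure.dirac x := by
  ext t ht
  rw [Measure.dirac_apply' _ ht]
  by_cases hx : x ∈ t
  · have htc : μ tᶜ = 0 := by
      refine measure_mono_null (fun y hy => ?_) h
      simp only [Set.mem_compl_iff, Set.mem_singleton_iff]
      rintro rfl; exact hy hx
    have : μ t = 1 := by
      rwa [prob_compl_eq_zero_iff ht] at htc
    simp [this, Set.indicator_of_mem hx]
  · have : μ t = 0 := by
      refine measure_mono_null (fun y hy => ?_) h
      simp only [Set.mem_compl_iff, Set.mem_singleton_iff]
      rintro rfl; exact hx hy
    simp [this, Set.indicator_of_notMem hx]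


lemma rEdge_null (μ : Measure ℝ) [IsProbabilityMeasure μ] (hcs : suppBdd μ) :
    μ (Set.Ioi (rEdge μ)) = 0 := by
  obtain ⟨R, hR⟩ := hcs
  set T := {r : ℝ | μ (Set.Ioi r) = 0} with hT
  have hmem : |R| ∈ T := by
    refine measure_mono_null (fun y hy => ?_) hR
    simp only [Set.mem_Ioi] at hy
    simp only [Set.mem_setOf_eq]
    have : (0:ℝ) ≤ |R| := abs_nonneg R
    rw [abs_of_pos (by linarith)]
    exact lt_of_le_of_lt (le_abs_self R) hy
  have hIoi1 : μ (Set.Ioi (-(|R|+1))) = 1 := by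
    have h0 : μ (Set.Iic (-(|R|+1))) = 0 := by
      refine measure_mono_null (fun y hy => ?_) hR
      simp only [Set.mem_Iic] at hy
      simp only [Set.mem_setOf_eq]
      have : (0:ℝ) ≤ |R| := abs_nonneg R
      have : |y| ≥ |R| + 1 := by
        rw [abs_of_nonpos (by linarith)]; linarith
      linarith [le_abs_self R]
    have huniv : (Set.Iic (-(|R|+1))) ∪ (Set.Ioi (-(|R|+1))) = Set.univ := Set.Iic_union_Ioi
    have := measure_union_le (μ := μ) (Set.Iic (-(|R|+1))) (Set.Ioi (-(|R|+1)))
    rw [huniv, measure_univ, h0, zero_add] at this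
    exact le_antisymm prob_le_one this
  have hbdd : BddBelow T := by
    refine ⟨-(|R|+1), fun r hr => ?_⟩
    by_contra h
    push_neg at h
    have : μ (Set.Ioi (-(|R|+1))) ≤ μ (Set.Ioi r) := measure_mono (Set.Ioi_subset_Ioi h.le)
    rw [hr, hIoi1] at this
    simp at this
  have hq : ∀ q, rEdge μ < q → μ (Set.Ioi q) = 0 := by
    intro q hqlt
    obtain ⟨r, hrT, hrq⟩ := exists_lt_of_csInf_lt ⟨|R|, hmem⟩ hqlt
    exact measure_mono_null (Set.Ioi_subset_Ioi hrq.le) hrT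
  have hun : Set.Ioi (rEdge μ) = ⋃ n : ℕ, Set.Ioi (rEdge μ + ((n:ℝ)+1)⁻¹) := by
    ext x
    simp only [Set.mem_Ioi, Set.mem_iUnion]
    constructor
    · intro hx
      obtain ⟨n, hn⟩ := exists_nat_one_div_lt (sub_pos.mpr hx)
      exact ⟨n, by rw [one_div] at hn; linarith⟩
    · rintro ⟨n, hn⟩
      have : (0:ℝ) < ((n:ℝ)+1)⁻¹ := by positivity
      linarith
  rw [hun]
  refine measure_iUnion_null fun n => hq _ ?_
  have : (0:ℝ) < ((n:ℝ)+1)⁻¹ := by positivity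
  linarith

lemma rEdge_dirac (c : ℝ) : rEdge (Measure.dirac c) = c := by
  have : {r : ℝ | Measure.dirac c (Set.Ioi r) = 0} = Set.Ici c := by
    ext r
    rw [Set.mem_setOf_eq, Measure.dirac_apply' _ measurableSet_Ioi]
    simp [Set.indicator_apply, Set.mem_Ioi, not_lt]
  rw [rEdge, this, csInf_Ici]


lemma stG_dirac (c l : ℝ) : stG (Measure.dirac c) l = (l - c)⁻¹ := by
  rw [stG, integral_dirac]

lemma cov_strict (μ : Measure ℝ) [IsProbabilityMeasure μ] {s : Set ℝ}
    (hsc : μ sᶜ = 0) {f g : ℝ → ℝ}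
    (hf : Integrable f μ) (hg : Integrable g μ)
    (hfg : Integrable (fun y => f y * g y) μ)
    (hmono : ∀ x ∈ s, ∀ y ∈ s, 0 ≤ (f x - f y) * (g x - g y))
    (hstrict : ∀ x ∈ s, ∀ y ∈ s, x ≠ y → (f x - f y) * (g x - g y) ≠ 0)
    (hnd : ¬ ∃ c : ℝ, μ = Measure.dirac c) :
    (∫ y, f y ∂μ) * (∫ y, g y ∂μ) < ∫ y, f y * g y ∂μ := by
  set If := ∫ y, f y ∂μ with hIf
  set Ig := ∫ y, g y ∂μ with hIg
  set Ifg := ∫ y, f y * g y ∂μ with hIfg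
  have haes : ∀ᵐ x ∂μ, x ∈ s := by
    rw [ae_iff]; exact hsc
  have i1 : ∀ x : ℝ, Integrable (fun y => f x * g y) μ := fun x => hg.const_mul _
  have i2 : ∀ x : ℝ, Integrable (fun y => g x * f y) μ := fun x => hf.const_mul _
  have i3 : ∀ x : ℝ, Integrable (fun y => f x * g x - f x * g y) μ :=
    fun x => (integrable_const _).sub (i1 x)
  have i4 : ∀ x : ℝ, Integrable (fun y => f x * g x - f x * g y - g x * f y) μ :=
    fun x => (i3 x).sub (i2 x)
  have hinner_int : ∀ x : ℝ, Integrable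
      (fun y => f x * g x - f x * g y - g x * f y + f y * g y) μ :=
    fun x => (i4 x).add hfg
  have hF : ∀ x : ℝ, ∫ y, (f x - f y) * (g x - g y) ∂μ
      = f x * g x - f x * Ig - g x * If + Ifg := by
    intro x
    have he : (fun y => (f x - f y) * (g x - g y))
        = fun y => f x * g x - f x * g y - g x * f y + f y * g y := by
      ext y; ring
    rw [he, integral_add (i4 x) hfg, integral_sub (i3 x) (i2 x),
      integral_sub (integrable_const _) (i1 x), integral_const]
    simp [integral_const_mul, hIf, hIg, hIfg]
  set φ : ℝ → ℝ := fun x => f x * g x - f x * Ig - g x * If + Ifg with hφ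
  have hφx : ∀ x, φ x = f x * g x - f x * Ig - g x * If + Ifg := fun x => rfl
  have j1 : Integrable (fun x => f x * g x - f x * Ig) μ := hfg.sub (hf.mul_const _)
  have j2 : Integrable (fun x => f x * g x - f x * Ig - g x * If) μ := j1.sub (hg.mul_const _)
  have hφint : Integrable φ μ := j2.add (integrable_const _)
  have hφnn : ∀ᵐ x ∂μ, 0 ≤ φ x := by
    filter_upwards [haes] with x hx
    rw [hφx x, ← hF x]
    refine integral_nonneg_of_ae ?_
    filter_upwards [haes] with y hy
    exact hmono x hx y hy
  have hφsum : ∫ x, φ x ∂μ = 2 * Ifg - 2 * (If * Ig) := by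
    simp only [hφx]
    rw [integral_add j2 (integrable_const _), integral_sub j1 (hg.mul_const _),
      integral_sub hfg (hf.mul_const _), integral_const]
    simp [integral_mul_const, hIf, hIg, hIfg]
    ring
  have hnonneg : 0 ≤ ∫ x, φ x ∂μ := integral_nonneg_of_ae hφnn
  rcases lt_or_ge (If * Ig) Ifg with h | h
  · exact h
  exfalso
  have hz : ∫ x, φ x ∂μ = 0 := le_antisymm (by rw [hφsum]; linarith) hnonneg
  have hφ0 : φ =ᵐ[μ] 0 := (integral_eq_zero_iff_of_nonneg_ae hφnn hφint).mp hz
  haveI : (ae μ).NeBot := ae_neBot.mpr (IsProbabilityMeasure.ne_zero μ)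
  obtain ⟨x, hxs, hx0⟩ := (haes.and hφ0).exists
  have hinnz : ∫ y, (f x - f y) * (g x - g y) ∂μ = 0 := by
    rw [hF x, ← hφx x]; simpa using hx0
  have hinnnn : ∀ᵐ y ∂μ, 0 ≤ (f x - f y) * (g x - g y) := by
    filter_upwards [haes] with y hy
    exact hmono x hxs y hy
  have hinnint : Integrable (fun y => (f x - f y) * (g x - g y)) μ :=
    (hinner_int x).congr (ae_of_all _ fun y => by ring)
  have h0 : (fun y => (f x - f y) * (g x - g y)) =ᵐ[μ] 0 :=
    (integral_eq_zero_iff_of_nonneg_ae hinnnn hinnint).mp hinnz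
  have hdir : μ ({x}ᶜ) = 0 := by
    have hae : ∀ᵐ y ∂μ, y = x := by
      filter_upwards [haes, h0] with y hy h0y
      by_contra hne
      exact hstrict x hxs y hy (fun hxy => hne hxy.symm) (by simpa using h0y)
    have h2 : ({x}ᶜ : Set ℝ) = {a | ¬ a = x} := by ext; simp
    rw [h2]; exact ae_iff.mp hae
  exact hnd ⟨x, eq_dirac_of μ x hdir⟩

lemma integrable_inv_shift (μ : Measure ℝ) [IsProbabilityMeasure μ]
    (hnull : μ (Set.Ioi (rEdge μ)) = 0) {a : ℝ} (ha : rEdge μ < a) :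
    Integrable (fun y => (a - y)⁻¹) μ := by
  have hae : ∀ᵐ y ∂μ, y ≤ rEdge μ := by
    rw [ae_iff]; simp only [not_le]; exact hnull
  refine (integrable_const ((a - rEdge μ)⁻¹)).mono' ?_ ?_
  · exact ((measurable_const.sub measurable_id).inv).aestronglyMeasurable
  · filter_upwards [hae] with y hy
    have h1 : 0 < a - y := by linarith
    rw [Real.norm_eq_abs, abs_of_pos (inv_pos.mpr h1)]
    gcongr


lemma integrable_inv_mul (μ : Measure ℝ) [IsProbabilityMeasure μ]
    (hnull : μ (Set.Ioi (rEdge μ)) = 0) {a b : ℝ} (ha : rEdge μ < a) (hb : rEdge μ < b) :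
    Integrable (fun y => (a - y)⁻¹ * (b - y)⁻¹) μ := by
  have hae : ∀ᵐ y ∂μ, y ≤ rEdge μ := by
    rw [ae_iff]; simp only [not_le]; exact hnull
  refine (integrable_const ((a - rEdge μ)⁻¹ * (b - rEdge μ)⁻¹)).mono' ?_ ?_
  · exact (((measurable_const.sub measurable_id).inv).mul
      ((measurable_const.sub measurable_id).inv)).aestronglyMeasurable
  · filter_upwards [hae] with y hy
    have h1 : 0 < a - y := by linarith
    have h2 : 0 < b - y := by linarith
    have h3 : 0 < a - rEdge μ := by linarith
    have h4 : 0 < b - rEdge μ := by linarith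
    rw [Real.norm_eq_abs, abs_of_pos (mul_pos (inv_pos.mpr h1) (inv_pos.mpr h2))]
    have e1 : (a - y)⁻¹ ≤ (a - rEdge μ)⁻¹ := by gcongr
    have e2 : (b - y)⁻¹ ≤ (b - rEdge μ)⁻¹ := by gcongr
    exact mul_le_mul e1 e2 (inv_pos.mpr h2).le (inv_pos.mpr h3).le


/-- The R-transform R_μ = K_μ − 1/· is strictly increasing on its domain
    (0, G_μ(r(μ))) unless μ is a point mass, in which case it is constant
    (equal to the location of the atom). -/
theorem stmt5 (μ : Measure ℝ) [IsProbabilityMeasure μ] (hcs : suppBdd μ)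
    (K : ℝ → ℝ) (S : Set ℝ) (hS : S ⊆ Set.Ioi (0 : ℝ))
    (hK : ∀ z ∈ S, rEdge μ < K z ∧ stG μ (K z) = z) :
    ((¬ ∃ c : ℝ, μ = Measure.dirac c) →
        StrictMonoOn (fun z : ℝ => K z - 1 / z) S) ∧
      (∀ c : ℝ, μ = Measure.dirac c → ∀ z ∈ S, K z - 1 / z = c) := by
  constructor
  · intro hnd
    intro z₁ hz₁ z₂ hz₂ h12
    have hz₁pos : 0 < z₁ := hS hz₁
    have hz₂pos : 0 < z₂ := hS hz₂
    obtain ⟨hbE, hGb⟩ := hK z₁ hz₁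
    obtain ⟨haE, hGa⟩ := hK z₂ hz₂
    set a := K z₂ with hadef
    set b := K z₁ with hbdef
    have hnull := rEdge_null μ hcs
    have hae : ∀ᵐ y ∂μ, y ≤ rEdge μ := by
      rw [ae_iff]; simp only [not_le]; exact hnull
    set f : ℝ → ℝ := fun y => (a - y)⁻¹ with hfdef
    set g : ℝ → ℝ := fun y => (b - y)⁻¹ with hgdef
    have hif : Integrable f μ := integrable_inv_shift μ hnull haE
    have hig : Integrable g μ := integrable_inv_shift μ hnull hbE
    have hifg : Integrable (fun y => f y * g y) μ := integrable_inv_mul μ hnull haE hbE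
    have hsc : μ (Set.Iic (rEdge μ))ᶜ = 0 := by rwa [Set.compl_Iic]
    -- monotonicity hypotheses
    have hid : ∀ c : ℝ, rEdge μ < c → ∀ x ∈ Set.Iic (rEdge μ), ∀ y ∈ Set.Iic (rEdge μ),
        (c - x)⁻¹ - (c - y)⁻¹ = (x - y) * ((c - x)⁻¹ * (c - y)⁻¹) := by
      intro c hc x hx y hy
      have h1 : c - x ≠ 0 := by simp only [Set.mem_Iic] at hx; intro h; linarith [hx]
      have h2 : c - y ≠ 0 := by simp only [Set.mem_Iic] at hy; intro h; linarith [hy]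
      field_simp
      ring
    have hpos : ∀ c : ℝ, rEdge μ < c → ∀ x ∈ Set.Iic (rEdge μ), 0 < (c - x)⁻¹ := by
      intro c hc x hx
      simp only [Set.mem_Iic] at hx
      exact inv_pos.mpr (by linarith)
    have hcov : (∫ y, f y ∂μ) * (∫ y, g y ∂μ) < ∫ y, f y * g y ∂μ := by
      refine cov_strict μ hsc hif hig hifg ?_ ?_ hnd
      · intro x hx y hy
        rw [hfdef, hgdef]
        simp only
        rw [hid a haE x hx y hy, hid b hbE x hx y hy]
        have := mul_pos (mul_pos (hpos a haE x hx) (hpos a haE y hy))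
          (mul_pos (hpos b hbE x hx) (hpos b hbE y hy))
        nlinarith [sq_nonneg (x - y)]
      · intro x hx y hy hxy
        rw [hfdef, hgdef]
        simp only
        rw [hid a haE x hx y hy, hid b hbE x hx y hy]
        have hp := mul_pos (mul_pos (hpos a haE x hx) (hpos a haE y hy))
          (mul_pos (hpos b hbE x hx) (hpos b hbE y hy))
        have h0 : 0 < (x - y) ^ 2 := by
          rcases (sub_ne_zero.mpr hxy).lt_or_gt with h | h <;> nlinarith
        nlinarith
    have hIfval : ∫ y, f y ∂μ = z₂ := hGa
    have hIgval : ∫ y, g y ∂μ = z₁ := hGb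
    rw [hIfval, hIgval] at hcov
    -- z₂ - z₁ = (b - a) * ∫ fg
    have hdiff : z₂ - z₁ = (b - a) * ∫ y, f y * g y ∂μ := by
      rw [← hIfval, ← hIgval, ← integral_sub hif hig, ← integral_const_mul]
      refine integral_congr_ae ?_
      filter_upwards [hae] with y hy
      have h1 : a - y ≠ 0 := by intro h; linarith
      have h2 : b - y ≠ 0 := by intro h; linarith
      rw [hfdef, hgdef]
      simp only
      field_simp
      ring
    have hIfgpos : 0 < ∫ y, f y * g y ∂μ := lt_trans (by positivity) hcov
    have hba : 0 < b - a := by nlinarith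
    -- conclude
    simp only
    have hkey : (b - a) * (z₁ * z₂) < z₂ - z₁ := by nlinarith
    have hfrac : b - a < 1 / z₁ - 1 / z₂ := by
      rw [div_sub_div _ _ (ne_of_gt hz₁pos) (ne_of_gt hz₂pos)]
      rw [lt_div_iff₀ (by positivity)]
      nlinarith
    linarith
  · intro c hμ z hz
    obtain ⟨hE, hG⟩ := hK z hz
    rw [hμ, rEdge_dirac] at hE
    rw [hμ, stG_dirac] at hG
    have hzpos : 0 < z := hS hz
    have h1 : K z - c = z⁻¹ := by
      rw [← inv_inv (K z - c), hG]
    rw [one_div]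
    linarith [h1]
end

section
/- Let μ be a compactly supported probability measure on ℝ with right edge ρ = r(μ), μ ≠ δ_ρ, and suppose there are α ∈ (0,1] and M < ∞ with G_μ(x) ≤ (1−α)/(x−ρ) + M for all x > ρ. Then for every u > max(G_μ(r(μ)+1), 2M/α) in the domain of the R-transform, R_μ(u) ≤ ρ − α/(2u). -/
open MeasureTheory Filter Topology

/-- If μ ≠ δ_ρ (ρ = r(μ)) satisfies the tail bound G_μ(x) ≤ (1−α)/(x−ρ) + M for
    x > ρ, then for every u > max(G_μ(r(μ)+1), 2M/α) in the domain of the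
    R-transform, R_μ(u) = K_μ(u) − 1/u ≤ ρ − α/(2u). -/
theorem stmt7 (μ : Measure ℝ) [IsProbabilityMeasure μ] (hcs : suppBdd μ)
    (hnd : μ ≠ Measure.dirac (rEdge μ))
    (α M : ℝ) (hα : 0 < α) (hα1 : α ≤ 1)
    (htail : ∀ x : ℝ, rEdge μ < x → stG μ x ≤ (1 - α) / (x - rEdge μ) + M)
    (K : ℝ → ℝ) (u : ℝ)
    (hu : max (stG μ (rEdge μ + 1)) (2 * M / α) < u)
    (hK : rEdge μ < K u ∧ stG μ (K u) = u) :
    K u - 1 / u ≤ rEdge μ - α / (2 * u) := by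
  obtain ⟨hKρ, hGK⟩ := hK
  set ρ := rEdge μ with hρdef
  obtain ⟨R, hR⟩ := hcs
  have hS : μ (Set.Ioi R) = 0 :=
    measure_mono_null (fun y hy => lt_of_lt_of_le hy (le_abs_self y)) hR
  have hIic : μ (Set.Iic (-(R+1))) = 0 :=
    measure_mono_null (fun y hy => by
      simp only [Set.mem_Iic] at hy
      simp only [Set.mem_setOf_eq]
      have : R + 1 ≤ -y := by linarith
      have : R + 1 ≤ |y| := le_trans this (neg_le_abs y)
      linarith) hR
  have hone : μ (Set.Ioi (-(R+1))) = 1 := by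
    have : Set.Ioi (-(R+1)) = (Set.Iic (-(R+1)))ᶜ := Set.compl_Iic.symm
    rw [this, measure_compl measurableSet_Iic (by simp [hIic]), hIic]
    simp
  have hbdd : BddBelow {r : ℝ | μ (Set.Ioi r) = 0} := by
    refine ⟨-(R+1), fun s hs => ?_⟩
    by_contra h
    push_neg at h
    have : μ (Set.Ioi (-(R+1))) ≤ μ (Set.Ioi s) :=
      measure_mono (Set.Ioi_subset_Ioi h.le)
    rw [hone, hs] at this
    exact absurd this (by simp)
  have hne : Set.Nonempty {r : ℝ | μ (Set.Ioi r) = 0} := ⟨R, hS⟩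
  have hρ0 : μ (Set.Ioi ρ) = 0 := by
    have hsub : Set.Ioi ρ ⊆ ⋃ n : ℕ, Set.Ioi (ρ + 1 / (n + 1)) := by
      intro y hy
      obtain ⟨n, hn⟩ := exists_nat_one_div_lt (show (0:ℝ) < y - ρ from sub_pos.mpr hy)
      exact Set.mem_iUnion.mpr ⟨n, by simp only [Set.mem_Ioi]; linarith⟩
    refine measure_mono_null hsub (measure_iUnion_null fun n => ?_)
    have hlt : ρ < ρ + 1 / (n + 1) := by
      have : (0:ℝ) < 1 / (n + 1) := by positivity
      linarith
    obtain ⟨s, hs, hslt⟩ := (csInf_lt_iff hbdd hne).mp hlt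
    exact measure_mono_null (Set.Ioi_subset_Ioi hslt.le) hs
  have hae : ∀ᵐ y ∂μ, y ≤ ρ := by
    rw [ae_iff]
    convert hρ0 using 2
    ext y
    simp [Set.mem_Ioi, not_le]
  have hpos : 0 ≤ stG μ (ρ + 1) := by
    refine integral_nonneg_of_ae (hae.mono fun y hy => ?_)
    have : (0:ℝ) < ρ + 1 - y := by linarith
    positivity
  have hu0 : 0 < u := lt_of_le_of_lt hpos (lt_of_le_of_lt (le_max_left _ _) hu)
  have hM : 2 * M < α * u := by
    have h := lt_of_le_of_lt (le_max_right (stG μ (ρ + 1)) (2 * M / α)) hu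
    have := (div_lt_iff₀ hα).mp h
    linarith
  have h1 : u ≤ (1 - α) / (K u - ρ) + M := by
    have := htail (K u) hKρ
    rwa [hGK] at this
  have hx : 0 < K u - ρ := sub_pos.mpr hKρ
  have h2 : (u - M) * (K u - ρ) ≤ 1 - α := by
    have h1' : u - M ≤ (1 - α) / (K u - ρ) := by linarith
    exact (le_div_iff₀ hx).mp h1'
  have key : (K u - ρ) * (2 * u) ≤ 2 - α := by
    have hMd : 2 * M * (K u - ρ) < α * u * (K u - ρ) :=
      mul_lt_mul_of_pos_right hM hx
    nlinarith [mul_pos hu0 hx, sq_nonneg α, sq_nonneg (α * u * (K u - ρ)),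
      mul_pos (mul_pos hu0 hx) hx]
  have h2u : (0:ℝ) < 2 * u := by linarith
  have hfin : K u - ρ ≤ (2 - α) / (2 * u) := (le_div_iff₀ h2u).mpr key
  have e : (2 - α) / (2 * u) = 1 / u - α / (2 * u) := by
    field_simp
  linarith [hfin, e.le, e.ge]
end

section
/- With the definitions of J^β_μ and I^β(θ,x) as in the paper, fix x ≥ 0. There exist constants c, c′ ∈ ℝ (depending on μ_a, μ_b, ρ_a, ρ_b, x but not θ) such that for all sufficiently large θ, θ(x − ρ_a − ρ_b) − (β/2)log θ + c ≤ I^β(θ, x) ≤ θ(x − ρ_a − ρ_b) + β log θ + c′. Consequently, if x > ρ_a + ρ_b, then sup_{θ≥0} I^β(θ,x) = +∞. -/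
open MeasureTheory Filter Topology

noncomputable def GE (μ : Measure ℝ) (l : ℝ) : ENNReal :=
  ∫⁻ y, ENNReal.ofReal ((l - y)⁻¹) ∂μ

noncomputable def Jfun (β : ℝ) (μ : Measure ℝ) (R : ℝ → ℝ) (θ ρ : ℝ) : ℝ :=
  if ENNReal.ofReal (2 * θ / β) ≤ GE μ ρ then
    (β / 2) * ∫ u in (0 : ℝ)..(2 * θ / β), R u
  else
    θ * ρ - (β / 2) * Real.log θ - (β / 2) * (∫ y, Real.log (ρ - y) ∂μ)
      + (β / 2) * (Real.log (β / 2) - 1)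

lemma suppBdd.bound (μ : Measure ℝ) [IsProbabilityMeasure μ] (hc : suppBdd μ) :
    ∃ Rb : ℝ, 0 ≤ Rb ∧ μ (Set.Ioi Rb) = 0 ∧ (∀ᵐ y ∂μ, |y| ≤ Rb) ∧
      (∀ r, μ (Set.Ioi r) = 0 → -Rb ≤ r) := by
  obtain ⟨R, hR⟩ := hc
  have hae : ∀ᵐ y ∂μ, |y| ≤ |R| := by
    filter_upwards [measure_eq_zero_iff_ae_notMem.mp hR] with y hy
    simp only [Set.mem_setOf_eq, not_lt] at hy
    exact hy.trans (le_abs_self R)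
  have hIoi : μ (Set.Ioi |R|) = 0 := by
    refine measure_mono_null (fun y hy => ?_) hR
    simp only [Set.mem_Ioi] at hy
    simp only [Set.mem_setOf_eq]
    exact lt_of_le_of_lt (le_abs_self R) (hy.trans_le (le_abs_self y))
  refine ⟨|R|, abs_nonneg R, hIoi, hae, ?_⟩
  intro r hr
  by_contra hlt
  push_neg at hlt
  have hIic : μ (Set.Iic r) = 0 := by
    refine measure_mono_null (fun y hy => ?_) hR
    simp only [Set.mem_Iic] at hy
    simp only [Set.mem_setOf_eq]
    have : |R| < -y := by linarith
    exact lt_of_le_of_lt (le_abs_self R) (this.trans_le (neg_le_abs y))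
  have : μ (Set.Iic r) = 1 := by
    have := measure_compl (μ := μ) (measurableSet_Ioi (a := r)) (measure_ne_top μ _)
    rw [Set.compl_Ioi, hr, tsub_zero, measure_univ] at this
    exact this
  rw [hIic] at this
  exact one_ne_zero this.symm

lemma rEdge_facts (μ : Measure ℝ) [IsProbabilityMeasure μ] (hc : suppBdd μ) :
    μ (Set.Ioi (rEdge μ)) = 0 ∧ (∀ᵐ y ∂μ, y ≤ rEdge μ) := by
  obtain ⟨Rb, hRb0, hIoi, hae, hlb⟩ := suppBdd.bound μ hc
  have hne : Rb ∈ {r : ℝ | μ (Set.Ioi r) = 0} := hIoi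
  have hbdd : BddBelow {r : ℝ | μ (Set.Ioi r) = 0} := ⟨-Rb, fun r hr => hlb r hr⟩
  have hnull : μ (Set.Ioi (rEdge μ)) = 0 := by
    have hset : Set.Ioi (rEdge μ) = ⋃ n : ℕ, Set.Ioi (rEdge μ + ((n:ℝ)+1)⁻¹) := by
      ext y
      simp only [Set.mem_Ioi, Set.mem_iUnion]
      constructor
      · intro hy
        obtain ⟨n, hn⟩ := exists_nat_one_div_lt (sub_pos.mpr hy)
        exact ⟨n, by rw [one_div] at hn; linarith⟩
      · rintro ⟨n, hn⟩
        have : (0:ℝ) < ((n:ℝ)+1)⁻¹ := by positivity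
        linarith
    rw [hset]
    refine measure_iUnion_null fun n => ?_
    have hpos : (0:ℝ) < ((n:ℝ)+1)⁻¹ := by positivity
    obtain ⟨r, hr, hrlt⟩ := (csInf_lt_iff hbdd ⟨Rb, hne⟩).mp
      (show sInf {r : ℝ | μ (Set.Ioi r) = 0} < rEdge μ + ((n:ℝ)+1)⁻¹ from
        lt_add_of_pos_right _ hpos)
    exact measure_mono_null (Set.Ioi_subset_Ioi hrlt.le) hr
  refine ⟨hnull, ?_⟩
  filter_upwards [measure_eq_zero_iff_ae_notMem.mp hnull] with y hy
  simpa using hy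

lemma inv_integrable (μ : Measure ℝ) [IsProbabilityMeasure μ] (hc : suppBdd μ)
    {l : ℝ} (hl : rEdge μ < l) : Integrable (fun y => (l - y)⁻¹) μ := by
  have hae := (rEdge_facts μ hc).2
  refine ⟨(Measurable.inv (measurable_const.sub measurable_id)).aestronglyMeasurable, ?_⟩
  refine HasFiniteIntegral.of_bounded (C := (l - rEdge μ)⁻¹) ?_
  filter_upwards [hae] with y hy
  rw [Real.norm_eq_abs, abs_of_nonneg (inv_nonneg.mpr (by linarith))]
  exact inv_anti₀ (by linarith) (by linarith)

lemma stG_le (μ : Measure ℝ) [IsProbabilityMeasure μ] (hc : suppBdd μ)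
    {l : ℝ} (hl : rEdge μ < l) : stG μ l ≤ (l - rEdge μ)⁻¹ := by
  have hae := (rEdge_facts μ hc).2
  have h := integral_mono_ae (inv_integrable μ hc hl) (integrable_const ((l - rEdge μ)⁻¹))
    (by filter_upwards [hae] with y hy; exact inv_anti₀ (by linarith) (by linarith))
  simpa [stG] using h

lemma stG_ge (μ : Measure ℝ) [IsProbabilityMeasure μ] (hc : suppBdd μ)
    {l Rb : ℝ} (hl : rEdge μ < l) (hRb : ∀ᵐ y ∂μ, |y| ≤ Rb) (hRbe : -Rb ≤ rEdge μ) :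
    (l + Rb)⁻¹ ≤ stG μ l := by
  have h := integral_mono_ae (integrable_const ((l + Rb)⁻¹)) (inv_integrable μ hc hl)
    (by filter_upwards [hRb, (rEdge_facts μ hc).2] with y hy hy2
        refine inv_anti₀ (by linarith) (by linarith [neg_abs_le y]))
  simpa [stG] using h

lemma GE_ne_top (μ : Measure ℝ) [IsProbabilityMeasure μ] (hc : suppBdd μ)
    {ρ : ℝ} (hl : rEdge μ < ρ) : GE μ ρ ≠ ⊤ := by
  have hae := (rEdge_facts μ hc).2
  have h : GE μ ρ ≤ ENNReal.ofReal ((ρ - rEdge μ)⁻¹) := by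
    unfold GE
    calc ∫⁻ y, ENNReal.ofReal ((ρ - y)⁻¹) ∂μ
        ≤ ∫⁻ _, ENNReal.ofReal ((ρ - rEdge μ)⁻¹) ∂μ := by
          refine lintegral_mono_ae ?_
          filter_upwards [hae] with y hy
          exact ENNReal.ofReal_le_ofReal (inv_anti₀ (by linarith) (by linarith))
      _ = ENNReal.ofReal ((ρ - rEdge μ)⁻¹) := by simp
  exact (h.trans_lt ENNReal.ofReal_lt_top).ne

lemma Rbounds (μ : Measure ℝ) [IsProbabilityMeasure μ] (hc : suppBdd μ) (R : ℝ → ℝ)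
    {Rb : ℝ} (hRbae : ∀ᵐ y ∂μ, |y| ≤ Rb) (hRbe : -Rb ≤ rEdge μ)
    (hR : ∀ u : ℝ, 0 < u → rEdge μ < R u + 1 / u ∧ stG μ (R u + 1 / u) = u) :
    ∀ u : ℝ, 0 < u → -Rb ≤ R u ∧ R u ≤ rEdge μ := by
  intro u hu
  obtain ⟨hl, hs⟩ := hR u hu
  set l := R u + 1 / u with hld
  constructor
  · have h1 : (l + Rb)⁻¹ ≤ u := by rw [← hs]; exact stG_ge μ hc hl hRbae hRbe
    have hpos : 0 < l + Rb := by linarith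
    have h2 : u⁻¹ ≤ l + Rb := by
      rw [← inv_inv (l + Rb)]
      exact inv_anti₀ (by positivity) h1
    rw [one_div] at hld
    nlinarith
  · have h1 : u ≤ (l - rEdge μ)⁻¹ := by rw [← hs]; exact stG_le μ hc hl
    have hpos : 0 < l - rEdge μ := by linarith
    have h2 : l - rEdge μ ≤ u⁻¹ := by
      rw [← inv_inv (l - rEdge μ)]
      exact inv_anti₀ (by positivity) h1
    rw [one_div] at hld
    nlinarith

lemma stG_anti (μ : Measure ℝ) [IsProbabilityMeasure μ] (hc : suppBdd μ)
    {l1 l2 : ℝ} (h1 : rEdge μ < l1) (h12 : l1 ≤ l2) : stG μ l2 ≤ stG μ l1 := by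
  refine integral_mono_ae (inv_integrable μ hc (h1.trans_le h12)) (inv_integrable μ hc h1) ?_
  filter_upwards [(rEdge_facts μ hc).2] with y hy
  exact inv_anti₀ (by linarith) (by linarith)

lemma R_integrableOn (μ : Measure ℝ) [IsProbabilityMeasure μ] (hc : suppBdd μ) (R : ℝ → ℝ)
    {Rb : ℝ} (hRbae : ∀ᵐ y ∂μ, |y| ≤ Rb) (hRbe : -Rb ≤ rEdge μ)
    (hR : ∀ u : ℝ, 0 < u → rEdge μ < R u + 1 / u ∧ stG μ (R u + 1 / u) = u)
    {T : ℝ} (hT : 0 < T) : IntegrableOn R (Set.Ioc 0 T) volume := by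
  set l : ℝ → ℝ := fun u => R u + 1 / u with hl
  have hanti : ∀ u v : ℝ, 0 < u → u ≤ v → l v ≤ l u := by
    intro u v hu huv
    have hv : 0 < v := lt_of_lt_of_le hu huv
    rcases eq_or_lt_of_le huv with rfl | huv'
    · exact le_refl _
    by_contra hcon
    push_neg at hcon
    have := stG_anti μ hc (hR u hu).1 hcon.le
    rw [(hR u hu).2, (hR v hv).2] at this
    exact absurd this (not_le.mpr huv')
  have hmeas : ∀ a : ℝ, 0 < a → Measurable (fun u => l (max u a)) := by
    intro a ha
    refine Antitone.measurable fun u v huv => ?_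
    exact hanti _ _ (lt_max_of_lt_right ha) (max_le_max huv (le_refl a))
  have haem : AEMeasurable l (volume.restrict (Set.Ioc 0 T)) := by
    have hun : Set.Ioc (0:ℝ) T = ⋃ n : ℕ, Set.Ioc ((n:ℝ)+1)⁻¹ T := by
      ext u
      simp only [Set.mem_Ioc, Set.mem_iUnion]
      constructor
      · rintro ⟨hu1, hu2⟩
        obtain ⟨n, hn⟩ := exists_nat_one_div_lt hu1
        exact ⟨n, by rw [one_div] at hn; exact hn, hu2⟩
      · rintro ⟨n, hn1, hn2⟩
        exact ⟨lt_trans (by positivity) hn1, hn2⟩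
    rw [hun, aemeasurable_iUnion_iff]
    intro n
    have hpos : (0:ℝ) < ((n:ℝ)+1)⁻¹ := by positivity
    refine (hmeas _ hpos).aemeasurable.congr ?_
    filter_upwards [ae_restrict_mem measurableSet_Ioc] with u hu
    rw [max_eq_left hu.1.le]
  have haemR : AEMeasurable R (volume.restrict (Set.Ioc 0 T)) := by
    have : AEMeasurable (fun u => l u - 1 / u) (volume.restrict (Set.Ioc 0 T)) :=
      haem.sub ((measurable_const.div measurable_id).aemeasurable)
    refine this.congr ?_
    filter_upwards with u
    simp [hl]
  haveI : IsFiniteMeasure (volume.restrict (Set.Ioc (0:ℝ) T)) := by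
    refine ⟨?_⟩
    rw [Measure.restrict_apply_univ, Real.volume_Ioc]
    exact ENNReal.ofReal_lt_top
  refine ⟨haemR.aestronglyMeasurable, ?_⟩
  refine HasFiniteIntegral.of_bounded (C := max Rb |rEdge μ|) ?_
  filter_upwards [ae_restrict_mem measurableSet_Ioc] with u hu
  obtain ⟨h1, h2⟩ := Rbounds μ hc R hRbae hRbe hR u hu.1
  rw [Real.norm_eq_abs, abs_le]
  constructor
  · linarith [le_max_left Rb |rEdge μ|]
  · exact h2.trans ((le_abs_self _).trans (le_max_right _ _))

lemma integral_R_bounds (μ : Measure ℝ) [IsProbabilityMeasure μ] (hc : suppBdd μ) (R : ℝ → ℝ)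
    {Rb : ℝ} (hRbae : ∀ᵐ y ∂μ, |y| ≤ Rb) (hRbe : -Rb ≤ rEdge μ)
    (hR : ∀ u : ℝ, 0 < u → rEdge μ < R u + 1 / u ∧ stG μ (R u + 1 / u) = u)
    {T : ℝ} (hT : 1 ≤ T) :
    rEdge μ * T - Real.log T - (Rb + rEdge μ) ≤ ∫ u in (0:ℝ)..T, R u ∧
    (∫ u in (0:ℝ)..T, R u) ≤ rEdge μ * T := by
  have hT0 : (0:ℝ) < T := lt_of_lt_of_le one_pos hT
  have hint : IntegrableOn R (Set.Ioc 0 T) volume :=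
    R_integrableOn μ hc R hRbae hRbe hR hT0
  have hint1 : IntegrableOn R (Set.Ioc 0 1) volume :=
    hint.mono_set (Set.Ioc_subset_Ioc_right hT)
  have hint2 : IntegrableOn R (Set.Ioc 1 T) volume :=
    hint.mono_set (Set.Ioc_subset_Ioc_left one_pos.le)
  haveI : ∀ a b : ℝ, IsFiniteMeasure (volume.restrict (Set.Ioc a b)) := by
    intro a b
    refine ⟨?_⟩
    rw [Measure.restrict_apply_univ, Real.volume_Ioc]
    exact ENNReal.ofReal_lt_top
  have hvol : ∀ a b : ℝ, a ≤ b → (volume (Set.Ioc a b)).toReal = b - a := by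
    intro a b hab
    rw [Real.volume_Ioc, ENNReal.toReal_ofReal (by linarith)]
  rw [intervalIntegral.integral_of_le hT0.le]
  constructor
  · -- lower bound
    have hsplit : (∫ u in Set.Ioc (0:ℝ) T, R u) =
        (∫ u in Set.Ioc (0:ℝ) 1, R u) + ∫ u in Set.Ioc (1:ℝ) T, R u := by
      rw [← setIntegral_union (Set.Ioc_disjoint_Ioc_of_le le_rfl) measurableSet_Ioc hint1 hint2,
        Set.Ioc_union_Ioc_eq_Ioc zero_le_one hT]
    have hinv : IntegrableOn (fun u : ℝ => u⁻¹) (Set.Ioc 1 T) volume := by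
      refine ⟨measurable_inv.aestronglyMeasurable, ?_⟩
      refine HasFiniteIntegral.of_bounded (C := 1) ?_
      filter_upwards [ae_restrict_mem measurableSet_Ioc] with u hu
      rw [Real.norm_eq_abs, abs_of_nonneg (inv_nonneg.mpr (by linarith [hu.1]))]
      rw [← inv_one]
      exact inv_anti₀ one_pos hu.1.le
    have hlow1 : -Rb ≤ ∫ u in Set.Ioc (0:ℝ) 1, R u := by
      have := setIntegral_mono_on (integrableOn_const (id (by
        rw [Real.volume_Ioc]; exact ENNReal.ofReal_lt_top.ne))) hint1 measurableSet_Ioc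
        (fun u hu => (Rbounds μ hc R hRbae hRbe hR u hu.1).1)
      rwa [setIntegral_const, Measure.real, hvol 0 1 zero_le_one, smul_eq_mul, show (1:ℝ)-0 = 1 by ring,
        one_mul] at this
    have hlow2 : rEdge μ * (T - 1) - Real.log T ≤ ∫ u in Set.Ioc (1:ℝ) T, R u := by
      have hintg : IntegrableOn (fun u : ℝ => rEdge μ - u⁻¹) (Set.Ioc 1 T) volume :=
        (integrableOn_const (id (by
          rw [Real.volume_Ioc]; exact ENNReal.ofReal_lt_top.ne))).sub hinv
      have hmono := setIntegral_mono_on hintg hint2 measurableSet_Ioc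
        (fun u hu => by
          have h := (hR u (lt_trans one_pos hu.1)).1
          rw [one_div] at h
          linarith)
      have hcomp : (∫ u in Set.Ioc (1:ℝ) T, (rEdge μ - u⁻¹)) =
          rEdge μ * (T - 1) - Real.log T := by
        rw [integral_sub (integrableOn_const (id (by
          rw [Real.volume_Ioc]; exact ENNReal.ofReal_lt_top.ne)) :
            IntegrableOn (fun _ : ℝ => rEdge μ) (Set.Ioc 1 T) volume) hinv,
          setIntegral_const, Measure.real, hvol 1 T hT, smul_eq_mul]
        have : (∫ u in Set.Ioc (1:ℝ) T, u⁻¹) = Real.log T := by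
          rw [← intervalIntegral.integral_of_le hT, integral_inv_of_pos one_pos hT0]
          simp
        rw [this]; ring
      rw [hcomp] at hmono
      exact hmono
    rw [hsplit]
    have hlog : 0 ≤ Real.log T := Real.log_nonneg hT
    nlinarith
  · -- upper bound
    have := setIntegral_mono_on hint (integrableOn_const (id (by
      rw [Real.volume_Ioc]; exact ENNReal.ofReal_lt_top.ne))) measurableSet_Ioc
      (fun u hu => (Rbounds μ hc R hRbae hRbe hR u hu.1).2)
    rwa [setIntegral_const, Measure.real, hvol 0 T hT0.le, smul_eq_mul, sub_zero, mul_comm] at this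


lemma per_measure (β : ℝ) (hβ : 0 < β) (μ : Measure ℝ) [IsProbabilityMeasure μ]
    (hc : suppBdd μ) (ρ : ℝ) (hρ : rEdge μ ≤ ρ) (R : ℝ → ℝ)
    (hR : ∀ u : ℝ, 0 < u → ENNReal.ofReal u < GE μ (rEdge μ) →
      rEdge μ < R u + 1 / u ∧ stG μ (R u + 1 / u) = u) :
    ∃ C₁ C₂ θ₀ : ℝ, 1 ≤ θ₀ ∧ ∀ θ, θ₀ ≤ θ →
      θ * ρ - (β / 2) * Real.log θ + C₁ ≤ Jfun β μ R θ ρ ∧ Jfun β μ R θ ρ ≤ θ * ρ + C₂ := by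
  by_cases hG : GE μ ρ = ⊤
  · have hρe : ρ = rEdge μ := by
      rcases eq_or_lt_of_le hρ with h | h
      · exact h.symm
      · exact absurd hG (GE_ne_top μ hc h)
    have hGe : GE μ (rEdge μ) = ⊤ := by rw [← hρe]; exact hG
    have hR' : ∀ u : ℝ, 0 < u → rEdge μ < R u + 1/u ∧ stG μ (R u + 1/u) = u :=
      fun u hu => hR u hu (by rw [hGe]; exact ENNReal.ofReal_lt_top)
    obtain ⟨Rb, hRb0, hIoi, hRbae, hlb⟩ := suppBdd.bound μ hc
    have hRbe : -Rb ≤ rEdge μ := le_csInf ⟨Rb, hIoi⟩ fun r hr => hlb r hr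
    refine ⟨-(β/2)*(Rb + rEdge μ + Real.log (2/β)), 0, max 1 β, le_max_left _ _, ?_⟩
    intro θ hθ
    have hθ1 : 1 ≤ θ := le_trans (le_max_left _ _) hθ
    have hθβ : β ≤ θ := le_trans (le_max_right _ _) hθ
    have hT : 1 ≤ 2*θ/β := by rw [le_div_iff₀ hβ]; linarith
    have hJ : Jfun β μ R θ ρ = (β/2) * ∫ u in (0:ℝ)..(2*θ/β), R u := by
      rw [Jfun, if_pos]; rw [hG]; exact le_top
    obtain ⟨hlo, hhi⟩ := integral_R_bounds μ hc R hRbae hRbe hR' hT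
    have hlog : Real.log (2*θ/β) = Real.log θ + Real.log (2/β) := by
      rw [show 2*θ/β = θ * (2/β) by ring, Real.log_mul (by linarith) (by positivity)]
    constructor
    · rw [hJ, hρe]
      have hmul := mul_le_mul_of_nonneg_left hlo (by positivity : (0:ℝ) ≤ β/2)
      have heq : (β/2) * (rEdge μ * (2*θ/β) - Real.log (2*θ/β) - (Rb + rEdge μ)) =
          θ * rEdge μ - (β/2)*Real.log θ + -(β/2)*(Rb + rEdge μ + Real.log (2/β)) := by
        rw [hlog]; field_simp; ring
      linarith [hmul, heq.symm.le]
    · rw [hJ, hρe]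
      have hmul := mul_le_mul_of_nonneg_left hhi (by positivity : (0:ℝ) ≤ β/2)
      have heq : (β/2) * (rEdge μ * (2*θ/β)) = θ * rEdge μ := by field_simp
      linarith
  · set C : ℝ := -(β/2) * (∫ y, Real.log (ρ - y) ∂μ) + (β/2) * (Real.log (β/2) - 1) with hC
    refine ⟨C, C, max 1 ((β/2) * (GE μ ρ).toReal + 1), le_max_left _ _, ?_⟩
    intro θ hθ
    have hθ1 : 1 ≤ θ := le_trans (le_max_left _ _) hθ
    have hθ2 : (β/2) * (GE μ ρ).toReal + 1 ≤ θ := le_trans (le_max_right _ _) hθ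
    have ht0 : 0 ≤ (GE μ ρ).toReal := ENNReal.toReal_nonneg
    have hcond : ¬ ENNReal.ofReal (2*θ/β) ≤ GE μ ρ := by
      rw [not_le]
      rw [ENNReal.lt_ofReal_iff_toReal_lt hG]
      rw [lt_div_iff₀ hβ]
      nlinarith
    have hJ : Jfun β μ R θ ρ = θ * ρ - (β / 2) * Real.log θ
        - (β / 2) * (∫ y, Real.log (ρ - y) ∂μ) + (β / 2) * (Real.log (β / 2) - 1) := by
      rw [Jfun, if_neg hcond]
    have hlogθ : 0 ≤ Real.log θ := Real.log_nonneg hθ1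
    constructor
    · rw [hJ, hC]; linarith
    · rw [hJ, hC]; nlinarith

/-- For fixed x ≥ 0 (with x ≥ r(μa⊞μb)), there are constants c, c′ such that for
    all large θ, θ(x−ρa−ρb) − (β/2)log θ + c ≤ I^β(θ,x) ≤ θ(x−ρa−ρb) + β log θ + c′.
    Consequently if x > ρa + ρb then sup_{θ≥0} I^β(θ,x) = +∞. -/
theorem stmt15 (β : ℝ) (hβ : β = 1 ∨ β = 2)
    (μa μb μab : Measure ℝ) [IsProbabilityMeasure μa] [IsProbabilityMeasure μb]
    [IsProbabilityMeasure μab]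
    (hca : suppBdd μa) (hcb : suppBdd μb) (hcab : suppBdd μab)
    (ρa ρb x : ℝ) (hρa : rEdge μa ≤ ρa) (hρb : rEdge μb ≤ ρb)
    (hx0 : 0 ≤ x) (hx : rEdge μab ≤ x)
    (Ra Rb Rab : ℝ → ℝ)
    (hRa : ∀ u : ℝ, 0 < u → ENNReal.ofReal u < GE μa (rEdge μa) →
      rEdge μa < Ra u + 1 / u ∧ stG μa (Ra u + 1 / u) = u)
    (hRb : ∀ u : ℝ, 0 < u → ENNReal.ofReal u < GE μb (rEdge μb) →
      rEdge μb < Rb u + 1 / u ∧ stG μb (Rb u + 1 / u) = u)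
    (hRab : ∀ u : ℝ, 0 < u → ENNReal.ofReal u < GE μab (rEdge μab) →
      rEdge μab < Rab u + 1 / u ∧ stG μab (Rab u + 1 / u) = u)
    (hadd : ∃ ε : ℝ, 0 < ε ∧ ∀ u ∈ Set.Ioo (0 : ℝ) ε, Rab u = Ra u + Rb u) :
    (∃ c c' θ₀ : ℝ, ∀ θ : ℝ, θ₀ ≤ θ →
        θ * (x - ρa - ρb) - (β / 2) * Real.log θ + c ≤
            Jfun β μab Rab θ x - Jfun β μa Ra θ ρa - Jfun β μb Rb θ ρb ∧
          Jfun β μab Rab θ x - Jfun β μa Ra θ ρa - Jfun β μb Rb θ ρb ≤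
            θ * (x - ρa - ρb) + β * Real.log θ + c') ∧
      (ρa + ρb < x → ∀ M : ℝ, ∃ θ : ℝ, 0 ≤ θ ∧
        M < Jfun β μab Rab θ x - Jfun β μa Ra θ ρa - Jfun β μb Rb θ ρb) := by
  have hβ0 : 0 < β := by rcases hβ with h | h <;> rw [h] <;> norm_num
  obtain ⟨C₁a, C₂a, θ₀a, hθ₀a1, ha⟩ := per_measure β hβ0 μa hca ρa hρa Ra hRa
  obtain ⟨C₁b, C₂b, θ₀b, hθ₀b1, hb⟩ := per_measure β hβ0 μb hcb ρb hρb Rb hRb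
  obtain ⟨C₁c, C₂c, θ₀c, hθ₀c1, hab⟩ := per_measure β hβ0 μab hcab x hx Rab hRab
  set θ₀ : ℝ := max (max θ₀a θ₀b) θ₀c with hθ₀
  have hθ₀1 : 1 ≤ θ₀ := le_trans hθ₀a1 (le_trans (le_max_left _ _) (le_max_left _ _))
  set c : ℝ := C₁c - C₂a - C₂b with hc
  set c' : ℝ := C₂c - C₁a - C₁b with hc'
  have key : ∀ θ : ℝ, θ₀ ≤ θ →
      θ * (x - ρa - ρb) - (β / 2) * Real.log θ + c ≤
          Jfun β μab Rab θ x - Jfun β μa Ra θ ρa - Jfun β μb Rb θ ρb ∧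
        Jfun β μab Rab θ x - Jfun β μa Ra θ ρa - Jfun β μb Rb θ ρb ≤
          θ * (x - ρa - ρb) + β * Real.log θ + c' := by
    intro θ hθ
    have h1 := ha θ (le_trans (le_trans (le_max_left _ _) (le_max_left _ _)) hθ)
    have h2 := hb θ (le_trans (le_trans (le_max_right _ _) (le_max_left _ _)) hθ)
    have h3 := hab θ (le_trans (le_max_right _ _) hθ)
    have hlogθ : 0 ≤ Real.log θ := Real.log_nonneg (le_trans hθ₀1 hθ)
    constructor
    · have := h3.1; have := h1.2; have := h2.2
      nlinarith
    · have := h3.2; have := h1.1; have := h2.1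
      nlinarith
  refine ⟨⟨c, c', θ₀, key⟩, ?_⟩
  intro hxρ M
  set d : ℝ := x - ρa - ρb with hd
  have hd0 : 0 < d := by simp [hd]; linarith
  set s : ℝ := max (max 1 ((β+1)/d)) (M - c + 1) with hs
  have hs1 : 1 ≤ s := le_trans (le_max_left _ _) (le_max_left _ _)
  have hsd : β + 1 ≤ s * d := by
    have : (β+1)/d ≤ s := le_trans (le_max_right _ _) (le_max_left _ _)
    rw [div_le_iff₀ hd0] at this
    linarith
  have hsM : M - c + 1 ≤ s := le_max_right _ _
  set θ : ℝ := max θ₀ (s^2) with hθdef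
  have hθθ₀ : θ₀ ≤ θ := le_max_left _ _
  have hθ1 : 1 ≤ θ := le_trans hθ₀1 hθθ₀
  have hθ0 : 0 ≤ θ := by linarith
  refine ⟨θ, hθ0, ?_⟩
  set t : ℝ := Real.sqrt θ with ht
  have ht2 : t^2 = θ := Real.sq_sqrt hθ0
  have hts : s ≤ t := by
    have h1 : s^2 ≤ θ := le_max_right _ _
    have := Real.sqrt_le_sqrt h1
    rwa [Real.sqrt_sq (by linarith : (0:ℝ) ≤ s)] at this
  have ht1 : 1 ≤ t := le_trans hs1 hts
  have hlog : Real.log θ ≤ 2 * t := by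
    rw [← ht2, Real.log_pow]
    have := Real.log_le_sub_one_of_pos (by linarith : (0:ℝ) < t)
    push_cast
    linarith
  have hgrow : M < θ * d - (β/2) * Real.log θ + c := by
    have htd : β + 1 ≤ t * d := le_trans hsd (by nlinarith)
    have h2 : 0 ≤ t * (t*d - β - 1) := mul_nonneg (by linarith) (by linarith)
    nlinarith
  have := (key θ hθθ₀).1
  linarith
end
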